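/- Let d, k, p be positive integers with k ≤ p ≤ d, let U ∈ ℝ^{d×k} have orthonormal columns, let V ∈ ℝ^{d×(d−k)} be an orthonormal basis of the orthogonal complement of the range of U, and let X ∈ ℝ^{d×p} be such that Uᵀ X has rank k. Then tan θ_k(U, X) ≤ ‖Vᵀ X‖ / σ_k(Uᵀ X), where σ_k(Uᵀ X) denotes the k-th largest singular value of the k×p matrix Uᵀ X. -/

import Mathlib

open MeasureTheory ProbabilityTheory

noncomputable def vnorm {n : ℕ} (v : Fin n → ℝ) : ℝ := Real.sqrt (∑ i, v i ^ 2)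

noncomputable def vinf {n : ℕ} (v : Fin n → ℝ) : ℝ := ⨆ i, |v i|

def dotp {n : ℕ} (v w : Fin n → ℝ) : ℝ := ∑ i, v i * w i

/-- Spectral norm (largest singular value) of a real matrix. -/
noncomputable def specNorm {m n : ℕ} (A : Matrix (Fin m) (Fin n) ℝ) : ℝ :=
  sSup {r | ∃ v : Fin n → ℝ, vnorm v = 1 ∧ r = vnorm (A.mulVec v)}

/-- Largest entry in absolute value. -/
noncomputable def entryNorm {m n : ℕ} (A : Matrix (Fin m) (Fin n) ℝ) : ℝ :=
  ⨆ i, ⨆ j, |A i j|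

/-- `P` is a `p × p` orthogonal projection matrix of rank `k`. -/
def IsProjOfRank {p : ℕ} (k : ℕ) (P : Matrix (Fin p) (Fin p) ℝ) : Prop :=
  P.transpose = P ∧ P * P = P ∧ P.rank = k

/-- cos of the k-th principal angle between range U and range X. -/
noncomputable def cosPA {d q p : ℕ} (k : ℕ) (U : Matrix (Fin d) (Fin q) ℝ)
    (X : Matrix (Fin d) (Fin p) ℝ) : ℝ :=
  sSup {r | ∃ P : Matrix (Fin p) (Fin p) ℝ, IsProjOfRank k P ∧
    r = sInf {s | ∃ w : Fin p → ℝ, vnorm w = 1 ∧ P.mulVec w = w ∧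
      s = vnorm ((U.transpose * X).mulVec w) / vnorm (X.mulVec w)}}

/-- tan of the k-th principal angle between range U and range X, where V is an
orthonormal basis of the orthogonal complement of range U. -/
noncomputable def tanPA {d q q' p : ℕ} (k : ℕ) (U : Matrix (Fin d) (Fin q) ℝ)
    (V : Matrix (Fin d) (Fin q') ℝ) (X : Matrix (Fin d) (Fin p) ℝ) : ℝ :=
  sInf {r | ∃ P : Matrix (Fin p) (Fin p) ℝ, IsProjOfRank k P ∧
    r = sSup {s | ∃ w : Fin p → ℝ, vnorm w = 1 ∧ P.mulVec w = w ∧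
      s = vnorm ((V.transpose * X).mulVec w) / vnorm ((U.transpose * X).mulVec w)}}

/-- Column-wise Gram–Schmidt orthonormalization of a matrix. -/
noncomputable def matGS {d p : ℕ} (Y : Matrix (Fin d) (Fin p) ℝ) : Matrix (Fin d) (Fin p) ℝ :=
  Matrix.of fun i j =>
    (WithLp.equiv 2 (Fin d → ℝ))
      (@InnerProductSpace.gramSchmidtNormed ℝ (EuclideanSpace ℝ (Fin d)) _ _ _ (Fin p) _ _
        (inferInstance : WellFoundedLT (Fin p))
        (fun j' : Fin p => (WithLp.equiv 2 (Fin d → ℝ)).symm fun i' => Y i' j') j) i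

/-- The law of a `d × p` random matrix with i.i.d. standard Gaussian entries. -/
noncomputable def stdGaussianMatrix (d p : ℕ) : Measure (Fin d → Fin p → ℝ) :=
  Measure.pi fun _ => Measure.pi fun _ => gaussianReal 0 1

/-- The smallest (i.e. k-th largest, for a full-rank `k × p` matrix with `k ≤ p`)
singular value of a `k × p` real matrix. -/
noncomputable def sigmaKth {k p : ℕ} (M : Matrix (Fin k) (Fin p) ℝ) : ℝ :=
  sInf {r | ∃ u : Fin k → ℝ, vnorm u = 1 ∧ r = vnorm (M.transpose.mulVec u)}

lemma vnorm_nonneg {n : ℕ} (v : Fin n → ℝ) : 0 ≤ vnorm v := Real.sqrt_nonneg _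

lemma vnorm_eq_norm {n : ℕ} (v : Fin n → ℝ) :
    vnorm v = ‖(WithLp.equiv 2 (Fin n → ℝ)).symm v‖ := by
  rw [EuclideanSpace.norm_eq]
  simp [vnorm, sq_abs]

lemma vnorm_sq {n : ℕ} (v : Fin n → ℝ) : vnorm v ^ 2 = ∑ i, v i ^ 2 := by
  rw [vnorm, Real.sq_sqrt (Finset.sum_nonneg fun i _ => sq_nonneg _)]

lemma dotp_self {n : ℕ} (v : Fin n → ℝ) : dotp v v = vnorm v ^ 2 := by
  rw [vnorm_sq]; simp [dotp, sq]

lemma dotp_le {n : ℕ} (v w : Fin n → ℝ) : dotp v w ≤ vnorm v * vnorm w := by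
  have h := Finset.sum_mul_sq_le_sq_mul_sq Finset.univ v w
  calc dotp v w ≤ |dotp v w| := le_abs_self _
    _ = Real.sqrt ((∑ i, v i * w i) ^ 2) := by rw [Real.sqrt_sq_eq_abs]; rfl
    _ ≤ Real.sqrt ((∑ i, v i ^ 2) * ∑ i, w i ^ 2) := Real.sqrt_le_sqrt h
    _ = vnorm v * vnorm w := by
        rw [Real.sqrt_mul (Finset.sum_nonneg fun i _ => sq_nonneg _)]; rfl

lemma vnorm_smul {n : ℕ} (c : ℝ) (v : Fin n → ℝ) : vnorm (c • v) = |c| * vnorm v := by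
  rw [vnorm_eq_norm, vnorm_eq_norm]
  rw [show (WithLp.equiv 2 (Fin n → ℝ)).symm (c • v) = c • (WithLp.equiv 2 (Fin n → ℝ)).symm v from rfl]
  rw [norm_smul]; rfl

lemma dotp_mulVec {k p : ℕ} (A : Matrix (Fin k) (Fin p) ℝ) (u : Fin k → ℝ) (w : Fin p → ℝ) :
    dotp (A.transpose.mulVec u) w = dotp u (A.mulVec w) := by
  simp only [dotp, Matrix.mulVec, dotProduct, Matrix.transpose_apply, Finset.sum_mul,
    Finset.mul_sum]
  rw [Finset.sum_comm]
  congr 1; ext i; congr 1; ext j; ring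

lemma specNorm_nonneg {m n : ℕ} (A : Matrix (Fin m) (Fin n) ℝ) : 0 ≤ specNorm A :=
  Real.sSup_nonneg (by rintro r ⟨v, hv, rfl⟩; exact vnorm_nonneg _)

lemma sigmaKth_nonneg {k p : ℕ} (M : Matrix (Fin k) (Fin p) ℝ) : 0 ≤ sigmaKth M :=
  Real.sInf_nonneg (by rintro r ⟨v, hv, rfl⟩; exact vnorm_nonneg _)

lemma sigmaKth_bddBelow {k p : ℕ} (M : Matrix (Fin k) (Fin p) ℝ) :
    BddBelow {r | ∃ u : Fin k → ℝ, vnorm u = 1 ∧ r = vnorm (M.transpose.mulVec u)} :=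
  ⟨0, by rintro r ⟨v, hv, rfl⟩; exact vnorm_nonneg _⟩

/-- crude bound: `‖Av‖ ≤ √(∑ᵢⱼ Aᵢⱼ²)` for unit `v`. -/
lemma mulVec_bound {m n : ℕ} (A : Matrix (Fin m) (Fin n) ℝ) (v : Fin n → ℝ) (hv : vnorm v = 1) :
    vnorm (A.mulVec v) ≤ Real.sqrt (∑ i, ∑ j, A i j ^ 2) := by
  have hv2 : ∑ j, v j ^ 2 = 1 := by
    have := vnorm_sq v; rw [hv] at this; linarith
  rw [vnorm]
  apply Real.sqrt_le_sqrt
  apply Finset.sum_le_sum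
  intro i _
  calc (A.mulVec v i) ^ 2 = (∑ j, A i j * v j) ^ 2 := rfl
    _ ≤ (∑ j, A i j ^ 2) * ∑ j, v j ^ 2 := Finset.sum_mul_sq_le_sq_mul_sq _ _ _
    _ = ∑ j, A i j ^ 2 := by rw [hv2, mul_one]

lemma specNorm_bddAbove {m n : ℕ} (A : Matrix (Fin m) (Fin n) ℝ) :
    BddAbove {r | ∃ v : Fin n → ℝ, vnorm v = 1 ∧ r = vnorm (A.mulVec v)} :=
  ⟨Real.sqrt (∑ i, ∑ j, A i j ^ 2), by rintro r ⟨v, hv, rfl⟩; exact mulVec_bound A v hv⟩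

lemma le_specNorm {m n : ℕ} (A : Matrix (Fin m) (Fin n) ℝ) (v : Fin n → ℝ) (hv : vnorm v = 1) :
    vnorm (A.mulVec v) ≤ specNorm A :=
  le_csSup (specNorm_bddAbove A) ⟨v, hv, rfl⟩

/-- If `w` is a unit vector in the row space of `A`, then `σ_min(A) ≤ ‖Aw‖`. -/
lemma sigma_le_mulVec {k p : ℕ} (A : Matrix (Fin k) (Fin p) ℝ) (u : Fin k → ℝ)
    (w : Fin p → ℝ) (hw : A.transpose.mulVec u = w) (h1 : vnorm w = 1) :
    sigmaKth A ≤ vnorm (A.mulVec w) := by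
  have hu0 : u ≠ 0 := by
    rintro rfl
    rw [Matrix.mulVec_zero] at hw
    rw [← hw] at h1
    simp [vnorm] at h1
  have hc : 0 < vnorm u := by
    rw [vnorm_eq_norm]
    rw [norm_pos_iff]
    simpa using hu0
  set c := vnorm u with hcdef
  -- σ ≤ 1/c
  have h2 : sigmaKth A ≤ c⁻¹ := by
    have hmem : vnorm (c⁻¹ • u) = 1 := by
      rw [vnorm_smul, abs_of_pos (inv_pos.mpr hc), inv_mul_cancel₀ hc.ne']
    have : vnorm (A.transpose.mulVec (c⁻¹ • u)) = c⁻¹ := by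
      rw [Matrix.mulVec_smul, vnorm_smul, abs_of_pos (inv_pos.mpr hc), hw, h1, mul_one]
    calc sigmaKth A ≤ vnorm (A.transpose.mulVec (c⁻¹ • u)) :=
          csInf_le (sigmaKth_bddBelow A) ⟨c⁻¹ • u, hmem, rfl⟩
      _ = c⁻¹ := this
  -- 1/c ≤ ‖Aw‖
  have h3 : c⁻¹ ≤ vnorm (A.mulVec w) := by
    have hcs : dotp u (A.mulVec w) ≤ c * vnorm (A.mulVec w) := dotp_le u _
    have hdot : dotp u (A.mulVec w) = 1 := by
      rw [← dotp_mulVec, hw, dotp_self, h1, one_pow]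
    rw [hdot] at hcs
    rw [inv_eq_one_div]
    rw [div_le_iff₀ hc] at *
    nlinarith [vnorm_nonneg (A.mulVec w)]
  linarith

open Matrix Module in
lemma exists_proj {k p : ℕ} (A : Matrix (Fin k) (Fin p) ℝ) (hrank : A.rank = k) :
    ∃ P : Matrix (Fin p) (Fin p) ℝ, IsProjOfRank k P ∧
      ∀ w : Fin p → ℝ, P.mulVec w = w → ∃ u : Fin k → ℝ, A.transpose.mulVec u = w := by
  classical
  set T : EuclideanSpace ℝ (Fin k) →ₗ[ℝ] EuclideanSpace ℝ (Fin p) :=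
    Matrix.toEuclideanLin A.transpose with hT
  set W : Submodule ℝ (EuclideanSpace ℝ (Fin p)) := LinearMap.range T with hWdef
  have hWfin : Module.finrank ℝ W = k := by
    have h1 : A.transpose.rank = k := by rw [Matrix.rank_transpose]; exact hrank
    rw [Matrix.rank_eq_finrank_range_toLin A.transpose (PiLp.basisFun 2 ℝ (Fin p))
      (PiLp.basisFun 2 ℝ (Fin k))] at h1
    exact h1
  set πc : EuclideanSpace ℝ (Fin p) →L[ℝ] EuclideanSpace ℝ (Fin p) :=
    W.subtypeL ∘L W.orthogonalProjectionOnto with hπ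
  set P : Matrix (Fin p) (Fin p) ℝ := Matrix.toEuclideanLin.symm πc.toLinearMap with hPdef
  have hPlin : Matrix.toEuclideanLin P = πc.toLinearMap := Matrix.toEuclideanLin.apply_symm_apply _
  have hidemlin : ∀ v, πc (πc v) = πc v := by
    intro v
    simp only [hπ, ContinuousLinearMap.comp_apply, Submodule.subtypeL_apply]
    exact congrArg _ (Submodule.orthogonalProjectionOnto_mem_subspace_eq_self _)
  have hrange : LinearMap.range πc.toLinearMap = W := by
    apply le_antisymm
    · rintro x ⟨y, rfl⟩
      exact Submodule.coe_mem _
    · intro x hx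
      exact ⟨x, by
        simp only [hπ, ContinuousLinearMap.coe_comp, LinearMap.coe_comp, Function.comp_apply,
          ContinuousLinearMap.coe_coe, Submodule.subtypeL_apply]
        exact Submodule.starProjection_eq_self_iff.mpr hx ⟩
  refine ⟨P, ⟨?_, ?_, ?_⟩, ?_⟩
  · -- symmetric
    have hherm : P.IsHermitian :=
      Matrix.isHermitian_iff_isSymmetric.mpr (by
        rw [hPlin]
        exact (Submodule.starProjection_isSymmetric W))
    simpa [Matrix.IsHermitian, Matrix.conjTranspose_eq_transpose_of_trivial] using hherm
  · -- idempotent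
    apply Matrix.toEuclideanLin.injective
    rw [Matrix.toEuclideanLin_eq_toLin, Matrix.toLin_mul _ (PiLp.basisFun 2 ℝ (Fin p)) _,
      ← Matrix.toEuclideanLin_eq_toLin, hPlin]
    exact LinearMap.ext fun v => hidemlin v
  · -- rank
    rw [Matrix.rank_eq_finrank_range_toLin P (PiLp.basisFun 2 ℝ (Fin p))
      (PiLp.basisFun 2 ℝ (Fin p))]
    have : LinearMap.range ((Matrix.toLin (PiLp.basisFun 2 ℝ (Fin p))
        (PiLp.basisFun 2 ℝ (Fin p))) P) = W := by
      rw [← Matrix.toEuclideanLin_eq_toLin, hPlin, hrange]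
    rw [this, hWfin]
  · -- fixed points are in the row space
    intro w hw
    have hw' : πc ((WithLp.equiv 2 (Fin p → ℝ)).symm w) = (WithLp.equiv 2 (Fin p → ℝ)).symm w := by
      have := congrArg (WithLp.equiv 2 (Fin p → ℝ)).symm hw
      rwa [show (WithLp.equiv 2 (Fin p → ℝ)).symm (P.mulVec w)
        = Matrix.toEuclideanLin P ((WithLp.equiv 2 (Fin p → ℝ)).symm w) from rfl, hPlin] at this
    have hmem : (WithLp.equiv 2 (Fin p → ℝ)).symm w ∈ W := by
      rw [← hw']
      rw [hπ]
      exact Submodule.coe_mem _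
    rw [hWdef] at hmem
    obtain ⟨u', hu'⟩ := hmem
    refine ⟨(WithLp.equiv 2 (Fin k → ℝ)) u', ?_⟩
    have := congrArg (WithLp.equiv 2 (Fin p → ℝ)) hu'
    exact this

open Matrix Module in
lemma sigmaKth_pos {k p : ℕ} (hk : 0 < k) (A : Matrix (Fin k) (Fin p) ℝ)
    (hrank : A.rank = k) : 0 < sigmaKth A := by
  classical
  set T : EuclideanSpace ℝ (Fin k) →ₗ[ℝ] EuclideanSpace ℝ (Fin p) :=
    Matrix.toEuclideanLin A.transpose with hT
  have hinj : Function.Injective T := by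
    have h1 : A.transpose.rank = k := by rw [Matrix.rank_transpose]; exact hrank
    rw [Matrix.rank_eq_finrank_range_toLin A.transpose (PiLp.basisFun 2 ℝ (Fin p))
      (PiLp.basisFun 2 ℝ (Fin k))] at h1
    have hr : Module.finrank ℝ (LinearMap.range T) = k := h1
    have hd : Module.finrank ℝ (EuclideanSpace ℝ (Fin k)) = k := by
      simp [finrank_euclideanSpace]
    have := LinearMap.finrank_range_add_finrank_ker T
    rw [hr, hd] at this
    have hker : Module.finrank ℝ (LinearMap.ker T) = 0 := by omega
    rw [← LinearMap.ker_eq_bot]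
    exact Submodule.finrank_eq_zero.mp hker
  -- continuous function on compact sphere
  have hcomp : IsCompact (Metric.sphere (0 : EuclideanSpace ℝ (Fin k)) 1) :=
    isCompact_sphere _ _
  have hne : (Metric.sphere (0 : EuclideanSpace ℝ (Fin k)) 1).Nonempty := by
    refine ⟨EuclideanSpace.single (⟨0, hk⟩ : Fin k) (1:ℝ), ?_⟩
    rw [Metric.mem_sphere, dist_zero_right, EuclideanSpace.norm_single]
    norm_num
  obtain ⟨x₀, hx₀s, hmin'⟩ := hcomp.exists_isMinOn hne
    (Continuous.continuousOn (by continuity : Continuous fun x => ‖T x‖))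
  have hmin : ∀ y ∈ Metric.sphere (0 : EuclideanSpace ℝ (Fin k)) 1, ‖T x₀‖ ≤ ‖T y‖ :=
    fun y hy => hmin' hy
  have hx₀pos : 0 < ‖T x₀‖ := by
    rw [norm_pos_iff]
    intro h0
    have : x₀ = 0 := hinj (by simpa using h0)
    rw [this] at hx₀s
    simp at hx₀s
  refine lt_of_lt_of_le hx₀pos (le_csInf ?_ ?_)
  · refine ⟨vnorm (A.transpose.mulVec (Pi.single (⟨0, hk⟩ : Fin k) 1)),
      Pi.single (⟨0, hk⟩ : Fin k) 1, ?_, rfl⟩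
    rw [vnorm_eq_norm]
    rw [show ((WithLp.equiv 2 (Fin k → ℝ)).symm (Pi.single (⟨0, hk⟩ : Fin k) 1))
      = EuclideanSpace.single (⟨0, hk⟩ : Fin k) (1:ℝ) from rfl, EuclideanSpace.norm_single]
    norm_num
  · rintro r ⟨u, hu, rfl⟩
    have : vnorm (A.transpose.mulVec u) = ‖T ((WithLp.equiv 2 (Fin k → ℝ)).symm u)‖ := by
      rw [vnorm_eq_norm]; rfl
    rw [this]
    apply hmin
    rw [Metric.mem_sphere, dist_zero_right, ← vnorm_eq_norm]
    exact hu

/-- `tan θ_k(U, X) ≤ ‖Vᵀ X‖ / σ_k(Uᵀ X)`. -/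
theorem stmt3 (d k p : ℕ) (hk : 0 < k) (hkp : k ≤ p) (hpd : p ≤ d)
    (U : Matrix (Fin d) (Fin k) ℝ) (V : Matrix (Fin d) (Fin (d - k)) ℝ)
    (X : Matrix (Fin d) (Fin p) ℝ)
    (hU : U.transpose * U = 1)
    (hV : V.transpose * V = 1) (hUV : U.transpose * V = 0)
    (hrank : (U.transpose * X).rank = k) :
    tanPA k U V X ≤ specNorm (V.transpose * X) / sigmaKth (U.transpose * X) := by
  classical
  obtain ⟨P, hP, hPmem⟩ := exists_proj (U.transpose * X) hrank
  have hσpos := sigmaKth_pos hk (U.transpose * X) hrank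
  have hRHS : 0 ≤ specNorm (V.transpose * X) / sigmaKth (U.transpose * X) :=
    div_nonneg (specNorm_nonneg _) (sigmaKth_nonneg _)
  rw [tanPA]
  have hbdd : BddBelow {r | ∃ P : Matrix (Fin p) (Fin p) ℝ, IsProjOfRank k P ∧
      r = sSup {s | ∃ w : Fin p → ℝ, vnorm w = 1 ∧ P.mulVec w = w ∧
        s = vnorm ((V.transpose * X).mulVec w) / vnorm ((U.transpose * X).mulVec w)}} := by
    refine ⟨0, ?_⟩
    rintro r ⟨Q, hQ, rfl⟩
    exact Real.sSup_nonneg (by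
      rintro s ⟨w, hw, hPw, rfl⟩
      exact div_nonneg (vnorm_nonneg _) (vnorm_nonneg _))
  refine le_trans (csInf_le hbdd ⟨P, hP, rfl⟩) ?_
  apply Real.sSup_le _ hRHS
  rintro s ⟨w, hw, hPw, rfl⟩
  obtain ⟨u, hu⟩ := hPmem w hPw
  have h1 : sigmaKth (U.transpose * X) ≤ vnorm ((U.transpose * X).mulVec w) :=
    sigma_le_mulVec _ u w hu hw
  have h2 : vnorm ((V.transpose * X).mulVec w) ≤ specNorm (V.transpose * X) :=
    le_specNorm _ w hw
  exact div_le_div₀ (specNorm_nonneg _) h2 hσpos h1
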